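/- Let (A,[[·]],≻,⊒) be an extended well-founded monotone partial Σ-algebra and let R and S be TRSs over Σ such that ≻ is a partial model for R and ⊒ is a partial model for S. Then for every ground term s with [[s]] defined: (i) if s →_R t then [[t]] is defined and [[s]] ≻ [[t]]; (ii) if s →_S t then [[t]] is defined and [[s]] ⊒ [[t]]. -/
import Mathlib


namespace LocalTerm

/-- Terms over a signature `F` with arities `ar` and variables `X`. -/
inductive Tm (F : Type) (ar : F → ℕ) (X : Type) : Type
  | var : X → Tm F ar X
  | app : (f : F) → (Fin (ar f) → Tm F ar X) → Tm F ar X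

/-- Substitution. -/
def subst {F : Type} {ar : F → ℕ} {X Y : Type} (σ : X → Tm F ar Y) :
    Tm F ar X → Tm F ar Y
  | .var x => σ x
  | .app f ts => .app f fun i => subst σ (ts i)

/-- One-step rewrite relation of a set `R` of rules (over variables `X`),
acting on terms over variables `V`: a rule instance inside a one-hole context. -/
inductive Rw {F : Type} {ar : F → ℕ} {X V : Type}
    (R : Set (Tm F ar X × Tm F ar X)) : Tm F ar V → Tm F ar V → Prop
  | rule {l r : Tm F ar X} (h : (l, r) ∈ R) (σ : X → Tm F ar V) :
      Rw R (subst σ l) (subst σ r)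
  | ctxt {f : F} {ts : Fin (ar f) → Tm F ar V} (i : Fin (ar f)) {t' : Tm F ar V} :
      Rw R (ts i) t' → Rw R (Tm.app f ts) (Tm.app f (Function.update ts i t'))

/-- The set of variables of a term. -/
def Vars {F : Type} {ar : F → ℕ} {X : Type} : Tm F ar X → Set X
  | .var x => {x}
  | .app _ ts => ⋃ i, Vars (ts i)

/-- `R` is a TRS: no left-hand side is a variable,
and all variables of a right-hand side occur in the left-hand side. -/
def IsTRS {F : Type} {ar : F → ℕ} {X : Type}
    (R : Set (Tm F ar X × Tm F ar X)) : Prop :=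
  ∀ p ∈ R, (∀ x : X, p.1 ≠ Tm.var x) ∧ Vars p.2 ⊆ Vars p.1

/-- A partial interpretation of the function symbols in a set `A`:
for every `n`-ary symbol a partial function `Aⁿ ⇀ A`. -/
abbrev Interp (F : Type) (ar : F → ℕ) (A : Type) : Type :=
  ∀ f : F, (Fin (ar f) → A) → Option A

/-- `Eval I α t a` : the (partial) interpretation of `t` under assignment `α`
is defined and equal to `a`. -/
inductive Eval {F : Type} {ar : F → ℕ} {X A : Type}
    (I : Interp F ar A) (α : X → A) : Tm F ar X → A → Prop
  | var (x : X) : Eval I α (Tm.var x) (α x)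
  | app {f : F} {ts : Fin (ar f) → Tm F ar X} (as : Fin (ar f) → A) {a : A}
      (hts : ∀ i, Eval I α (ts i) (as i)) (hI : I f as = some a) :
      Eval I α (Tm.app f ts) a

/-- A set `T` of ground terms is defined if the interpretation of
every `t ∈ T` is defined. -/
def DefinedOn {F : Type} {ar : F → ℕ} {A : Type}
    (I : Interp F ar A) (T : Set (Tm F ar Empty)) : Prop :=
  ∀ t ∈ T, ∃ a : A, Eval I Empty.elim t a

/-- `succ` is a partial model for `R`: whenever the interpretation of a
left-hand side is defined, the right-hand side is defined as well and the
interpretations are related by `succ`. -/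
def PartialModel {F : Type} {ar : F → ℕ} {X A : Type}
    (I : Interp F ar A) (succ : A → A → Prop)
    (R : Set (Tm F ar X × Tm F ar X)) : Prop :=
  ∀ p ∈ R, ∀ (α : X → A) (a : A), Eval I α p.1 a →
    ∃ b : A, Eval I α p.2 b ∧ succ a b

/-- A partial function is closed w.r.t. a relation. -/
def ClosedFn {A : Type} {n : ℕ} (g : (Fin n → A) → Option A)
    (r : A → A → Prop) : Prop :=
  ∀ (v : Fin n → A) (i : Fin n) (b : A), r (v i) b → (g v).isSome →
    (g (Function.update v i b)).isSome

/-- A partial function is monotone w.r.t. a relation. -/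
def MonoFn {A : Type} {n : ℕ} (g : (Fin n → A) → Option A)
    (r : A → A → Prop) : Prop :=
  ∀ (v : Fin n → A) (i : Fin n) (b : A) (x y : A), r (v i) b →
    g v = some x → g (Function.update v i b) = some y → r x y

/-- `(A, I, r)` is a monotone partial algebra: every interpretation is
closed and monotone with respect to `r`. -/
def MonoAlg {F : Type} {ar : F → ℕ} {A : Type}
    (I : Interp F ar A) (r : A → A → Prop) : Prop :=
  ∀ f : F, ClosedFn (I f) r ∧ MonoFn (I f) r

/-- Well-foundedness: no infinite descending sequence. -/
def WFrel {A : Type} (r : A → A → Prop) : Prop :=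
  ¬ ∃ f : ℕ → A, ∀ n : ℕ, r (f n) (f (n + 1))

/-- `r` is terminating on `T`: no element of `T` starts an infinite `r`-sequence. -/
def SNon {B : Type} (r : B → B → Prop) (T : Set B) : Prop :=
  ∀ t ∈ T, ¬ ∃ f : ℕ → B, f 0 = t ∧ ∀ n : ℕ, r (f n) (f (n + 1))

/-- Relative termination on `T`: no element of `T` starts an infinite
`(r ∪ s)`-sequence containing infinitely many `r`-steps. -/
def SNrelOn {B : Type} (r s : B → B → Prop) (T : Set B) : Prop :=
  ∀ t ∈ T, ¬ ∃ f : ℕ → B, f 0 = t ∧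
    (∀ n : ℕ, r (f n) (f (n + 1)) ∨ s (f n) (f (n + 1))) ∧
    (∀ m : ℕ, ∃ n : ℕ, m ≤ n ∧ r (f n) (f (n + 1)))

/-- Relative termination (on everything). -/
def SNrel {B : Type} (r s : B → B → Prop) : Prop := SNrelOn r s Set.univ


theorem eval_det {F X A : Type} {ar : F → ℕ} (I : Interp F ar A) (β : X → A) :
    ∀ (t : Tm F ar X) (a b : A), Eval I β t a → Eval I β t b → a = b := by
  intro t
  induction t with
  | var x => intro a b ha hb; cases ha; cases hb; rfl
  | app f ts ih =>
    intro a b ha hb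
    cases ha with
    | app as hts hI =>
      cases hb with
      | app as' hts' hI' =>
        have : as = as' := funext fun i => ih i _ _ (hts i) (hts' i)
        subst this
        rw [hI] at hI'
        exact Option.some.inj hI'

theorem subst_eval_of {F X Y A : Type} {ar : F → ℕ} (I : Interp F ar A)
    (γ : Y → A) (σ : X → Tm F ar Y) (α : X → A) :
    ∀ (u : Tm F ar X) (a : A),
      (∀ x ∈ Vars u, Eval I γ (σ x) (α x)) → Eval I α u a →
      Eval I γ (subst σ u) a := by
  intro u
  induction u with
  | var x => intro a h he; cases he; exact h x (by simp [Vars])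
  | app f ts ih =>
    intro a h he
    cases he with
    | app as hts hI =>
      exact Eval.app as (fun i => ih i (as i)
        (fun x hx => h x (by simp only [Vars, Set.mem_iUnion]; exact ⟨i, hx⟩))
        (hts i)) hI

noncomputable def evalAssign {F X Y A : Type} {ar : F → ℕ} [Nonempty A]
    (I : Interp F ar A) (γ : Y → A) (σ : X → Tm F ar Y) : X → A :=
  open Classical in fun x => if h : ∃ c, Eval I γ (σ x) c then h.choose else Classical.arbitrary A

theorem eval_of_subst {F X Y A : Type} {ar : F → ℕ} [Nonempty A]
    (I : Interp F ar A) (γ : Y → A) (σ : X → Tm F ar Y) :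
    ∀ (u : Tm F ar X) (a : A), Eval I γ (subst σ u) a →
      Eval I (evalAssign I γ σ) u a ∧
      (∀ x ∈ Vars u, Eval I γ (σ x) (evalAssign I γ σ x)) := by
  intro u
  induction u with
  | var x =>
    intro a he
    have hex : ∃ c, Eval I γ (σ x) c := ⟨a, he⟩
    have hval : Eval I γ (σ x) (evalAssign I γ σ x) := by
      simp only [evalAssign, dif_pos hex]; exact hex.choose_spec
    have : evalAssign I γ σ x = a := eval_det I γ _ _ _ hval he
    constructor
    · rw [← this]; exact Eval.var x
    · intro y hy
      have : y = x := by simpa [Vars] using hy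
      subst this; exact hval
  | app f ts ih =>
    intro a he
    cases he with
    | app as hts hI =>
      constructor
      · exact Eval.app as (fun i => (ih i (as i) (hts i)).1) hI
      · intro x hx
        simp only [Vars, Set.mem_iUnion] at hx
        obtain ⟨i, hx⟩ := hx
        exact (ih i (as i) (hts i)).2 x hx

theorem rw_decreasing {F X A : Type} {ar : F → ℕ} [Nonempty A]
    (R : Set (Tm F ar X × Tm F ar X)) (hR : IsTRS R)
    (I : Interp F ar A) (r : A → A → Prop)
    (hmono : MonoAlg I r) (hpm : PartialModel I r R) :
    ∀ {s t : Tm F ar Empty}, Rw R s t → ∀ a : A, Eval I Empty.elim s a →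
      ∃ b : A, Eval I Empty.elim t b ∧ r a b := by
  intro s t h
  induction h with
  | rule hlr σ =>
    intro a ha
    obtain ⟨hαl, hvars⟩ := eval_of_subst I Empty.elim σ _ a ha
    obtain ⟨b, hb, hab⟩ := hpm _ hlr (evalAssign I Empty.elim σ) a hαl
    refine ⟨b, ?_, hab⟩
    exact subst_eval_of I Empty.elim σ _ _ b
      (fun x hx => hvars x ((hR _ hlr).2 hx)) hb
  | @ctxt f ts i t' _ ih =>
    intro a ha
    cases ha with
    | app as hts hI =>
      obtain ⟨b, hb, hab⟩ := ih (as i) (hts i)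
      have hclosed := (hmono f).1 as i b hab (by rw [hI]; rfl)
      obtain ⟨y, hy⟩ := Option.isSome_iff_exists.mp hclosed
      refine ⟨y, Eval.app (Function.update as i b) ?_ hy, (hmono f).2 as i b a y hab hI hy⟩
      intro j
      by_cases hj : j = i
      · subst hj; simpa using hb
      · simp [Function.update_of_ne hj]; exact hts j

/-- (Lemma on decreasingness.) Let `(A, I, succ, sq)` be an
extended well-founded monotone partial Σ-algebra, `succ` a partial model for
`R` and `sq` a partial model for `S`. Then for every ground term `s` whose
interpretation is defined: an `R`-step decreases the interpretation w.r.t.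
`succ`, and an `S`-step decreases it w.r.t. `sq` (in particular the
interpretation of the reduct is defined). -/
theorem eval_decreasing_of_partial_models
    {F X A : Type} {ar : F → ℕ} [Nonempty A]
    (R S : Set (Tm F ar X × Tm F ar X)) (hR : IsTRS R) (hS : IsTRS S)
    (I : Interp F ar A) (succ sq : A → A → Prop)
    (hmono1 : MonoAlg I succ) (hmono2 : MonoAlg I sq)
    (hwf : SNrel succ sq)
    (hpmR : PartialModel I succ R) (hpmS : PartialModel I sq S)
    (s : Tm F ar Empty) (a : A) (hs : Eval I Empty.elim s a) :
    (∀ t : Tm F ar Empty, Rw R s t →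
        ∃ b : A, Eval I Empty.elim t b ∧ succ a b) ∧
    (∀ t : Tm F ar Empty, Rw S s t →
        ∃ b : A, Eval I Empty.elim t b ∧ sq a b) := by
  exact ⟨fun t ht => rw_decreasing R hR I succ hmono1 hpmR ht a hs,
         fun t ht => rw_decreasing S hS I sq hmono2 hpmS ht a hs⟩

end LocalTerm
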